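/- Let ⟨·,·⟩ be the symmetric bilinear form on ℝ⁵ with orthogonal basis (L, E₁, E₂, E₃, E₄) satisfying ⟨L,L⟩ = 1 and ⟨E_i,E_i⟩ = −1 for i = 1, …, 4. Set L_i = L − E_i, D = 2L − E₁ − E₂ − E₃ − E₄, and D_i = D + E_i, and let Nef = cone({L, L₁, L₂, L₃, L₄, D, D₁, D₂, D₃, D₄}). Then: (a) {A ∈ Nef : ⟨A, D⟩ ≤ ⟨A, L_i⟩ for all i = 1, …, 4} = cone({D, D + L} ∪ {D_i : i = 1,…,4} ∪ {D + L_i : i = 1,…,4}); and (b) for each i, {A ∈ Nef : ⟨A, L_i⟩ ≤ ⟨A, D⟩ and ⟨A, L_i⟩ ≤ ⟨A, L_j⟩ for all j ≠ i} = cone({L, D + L, L_i, D + L_i} ∪ {L_i + L_j : j ≠ i} ∪ {D_j : j ≠ i}). -/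

import Mathlib

/-- The convex cone generated by a set `s`: all finite nonnegative real linear
combinations of elements of `s`. -/
def coneHull {E : Type*} [AddCommMonoid E] [Module ℝ E] (s : Set E) : Set E :=
  {x | ∃ (n : ℕ) (c : Fin n → ℝ) (g : Fin n → E),
    (∀ i, 0 ≤ c i) ∧ (∀ i, g i ∈ s) ∧ x = ∑ i, c i • g i}

/-- The intersection form on `ℝ⁵` for which the ordered basis `(L, E₁, E₂, E₃, E₄)` is
orthogonal with `⟨L,L⟩ = 1` and `⟨Eᵢ,Eᵢ⟩ = −1`. -/
def interForm16 (x y : Fin 5 → ℝ) : ℝ :=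
  x 0 * y 0 - x 1 * y 1 - x 2 * y 2 - x 3 * y 3 - x 4 * y 4

/-- The class `L` (pullback of a line). -/
def Lcl : Fin 5 → ℝ := ![1, 0, 0, 0, 0]

/-- The exceptional classes `E₁, …, E₄`. -/
def Ecl (i : Fin 4) : Fin 5 → ℝ := Pi.single i.succ 1

/-- The classes `Lᵢ = L − Eᵢ`. -/
def Licl (i : Fin 4) : Fin 5 → ℝ := Lcl - Ecl i

/-- The class `D = 2L − E₁ − E₂ − E₃ − E₄`. -/
def Dcl : Fin 5 → ℝ := (2 : ℝ) • Lcl - ∑ i, Ecl i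

/-- The classes `Dᵢ = D + Eᵢ`. -/
def Dicl (i : Fin 4) : Fin 5 → ℝ := Dcl + Ecl i

/-- The nef cone: the cone generated by `L`, the `Lᵢ`, `D` and the `Dᵢ`. -/
def nefCone16 : Set (Fin 5 → ℝ) :=
  coneHull ({Lcl, Dcl} ∪ Set.range Licl ∪ Set.range Dicl)


variable {E : Type*} [AddCommMonoid E] [Module ℝ E] {s : Set E}

theorem mem_coneHull {x : E} (hx : x ∈ s) : x ∈ coneHull s :=
  ⟨1, fun _ => 1, fun _ => x, fun _ => zero_le_one, fun _ => hx, by simp⟩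

theorem coneHull_zero : (0 : E) ∈ coneHull s :=
  ⟨0, fun _ => 0, fun i => i.elim0, fun i => le_refl _, fun i => i.elim0, by simp⟩

theorem coneHull_add {x y : E} (hx : x ∈ coneHull s) (hy : y ∈ coneHull s) :
    x + y ∈ coneHull s := by
  obtain ⟨n, c, g, hc, hg, rfl⟩ := hx
  obtain ⟨m, d, f, hd, hf, rfl⟩ := hy
  refine ⟨n + m, Fin.append c d, Fin.append g f, ?_, ?_, ?_⟩
  · intro i
    refine Fin.addCases (fun j => ?_) (fun j => ?_) i
    · simpa [Fin.append_left] using hc j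
    · simpa [Fin.append_right] using hd j
  · intro i
    refine Fin.addCases (fun j => ?_) (fun j => ?_) i
    · simpa [Fin.append_left] using hg j
    · simpa [Fin.append_right] using hf j
  · rw [Fin.sum_univ_add]
    simp [Fin.append_left, Fin.append_right]

theorem coneHull_smul {c : ℝ} {x : E} (hc : 0 ≤ c) (hx : x ∈ coneHull s) :
    c • x ∈ coneHull s := by
  obtain ⟨n, co, g, hc', hg, rfl⟩ := hx
  exact ⟨n, fun i => c * co i, g, fun i => mul_nonneg hc (hc' i),
    hg, by rw [Finset.smul_sum]; simp [mul_smul]⟩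

theorem coneHull_subset {T : Set E} (hsub : s ⊆ T) (h0 : (0:E) ∈ T)
    (hadd : ∀ x ∈ T, ∀ y ∈ T, x + y ∈ T)
    (hsmul : ∀ (c : ℝ), 0 ≤ c → ∀ x ∈ T, c • x ∈ T) : coneHull s ⊆ T := by
  rintro x ⟨n, c, g, hc, hg, rfl⟩
  induction n with
  | zero => simpa using h0
  | succ m ih =>
    rw [Fin.sum_univ_succ]
    exact hadd _ (hsmul _ (hc 0) _ (hsub (hg 0))) _
      (ih (fun i => c i.succ) (fun i => g i.succ) (fun i => hc _) (fun i => hg _))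

theorem Lcl_zero : Lcl 0 = 1 := rfl
theorem Lcl_succ (j : Fin 4) : Lcl j.succ = 0 := by fin_cases j <;> rfl
theorem Ecl_zero (i : Fin 4) : Ecl i 0 = 0 := by
  simp [Ecl, Pi.single_apply]
theorem Ecl_succ (i j : Fin 4) : Ecl i j.succ = if i = j then 1 else 0 := by
  simp [Ecl, Pi.single_apply, Fin.succ_inj, eq_comm]
theorem Dcl_zero : Dcl 0 = 2 := by
  simp [Dcl, Finset.sum_apply, Ecl_zero, Lcl_zero]
theorem Dcl_succ (j : Fin 4) : Dcl j.succ = -1 := by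
  simp [Dcl, Finset.sum_apply, Ecl_succ, Lcl_succ]
theorem Licl_zero (i : Fin 4) : Licl i 0 = 1 := by simp [Licl, Lcl_zero, Ecl_zero]
theorem Licl_succ (i j : Fin 4) : Licl i j.succ = if i = j then -1 else 0 := by
  simp [Licl, Lcl_succ, Ecl_succ]; split <;> norm_num
theorem Dicl_zero (i : Fin 4) : Dicl i 0 = 2 := by simp [Dicl, Dcl_zero, Ecl_zero]
theorem Dicl_succ (i j : Fin 4) : Dicl i j.succ = if i = j then 0 else -1 := by
  simp [Dicl, Dcl_succ, Ecl_succ]; split <;> norm_num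

theorem iFD (A : Fin 5 → ℝ) : interForm16 A Dcl = 2 * A 0 + A 1 + A 2 + A 3 + A 4 := by
  have h1 : (1 : Fin 5) = (0 : Fin 4).succ := rfl
  have h2 : (2 : Fin 5) = (1 : Fin 4).succ := rfl
  have h3 : (3 : Fin 5) = (2 : Fin 4).succ := rfl
  have h4 : (4 : Fin 5) = (3 : Fin 4).succ := rfl
  rw [interForm16, h1, h2, h3, h4, Dcl_zero, Dcl_succ, Dcl_succ, Dcl_succ, Dcl_succ]
  ring
theorem iFL (A : Fin 5 → ℝ) (i : Fin 4) :
    interForm16 A (Licl i) = A 0 + A i.succ := by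
  have h1 : (1 : Fin 5) = (0 : Fin 4).succ := rfl
  have h2 : (2 : Fin 5) = (1 : Fin 4).succ := rfl
  have h3 : (3 : Fin 5) = (2 : Fin 4).succ := rfl
  have h4 : (4 : Fin 5) = (3 : Fin 4).succ := rfl
  rw [interForm16, h1, h2, h3, h4, Licl_zero, Licl_succ, Licl_succ, Licl_succ, Licl_succ]
  fin_cases i <;> simp

theorem fin4_cover (p q r t j : Fin 4) (hpq : p ≠ q) (hpr : p ≠ r) (hpt : p ≠ t)
    (hqr : q ≠ r) (hqt : q ≠ t) (hrt : r ≠ t) : j = p ∨ j = q ∨ j = r ∨ j = t := by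
  revert hpq hpr hpt hqr hqt hrt; revert p q r t j; decide

theorem key_a (p q r t : Fin 4) (hpq : p ≠ q) (hpr : p ≠ r) (hpt : p ≠ t)
    (hqr : q ≠ r) (hqt : q ≠ t) (hrt : r ≠ t)
    (α β δ γq γr γt : ℝ) (hα : 0 ≤ α) (hβ : 0 ≤ β) (hδ : 0 ≤ δ)
    (hγq : 0 ≤ γq) (hγr : 0 ≤ γr) (hγt : 0 ≤ γt) (A : Fin 5 → ℝ)
    (h0 : A 0 = 2*α + 3*β + 3*δ + 2*γq + 2*γr + 2*γt)
    (hp : A p.succ = -α - β - 2*δ - γq - γr - γt)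
    (hq : A q.succ = -α - β - δ - γr - γt)
    (hr : A r.succ = -α - β - δ - γq - γt)
    (ht : A t.succ = -α - β - δ - γq - γr) :
    A ∈ coneHull ({Dcl, Dcl + Lcl} ∪ Set.range Dicl ∪
        Set.range (fun i => Dcl + Licl i) : Set (Fin 5 → ℝ)) := by
  have hA : A = α • Dcl + β • (Dcl + Lcl) + δ • (Dcl + Licl p)
      + γq • Dicl q + γr • Dicl r + γt • Dicl t := by
    funext k
    induction k using Fin.cases with
    | zero =>
      simp only [Pi.add_apply, Pi.smul_apply, smul_eq_mul, Dcl_zero, Lcl_zero,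
        Licl_zero, Dicl_zero, h0]
      ring
    | succ j =>
      rcases fin4_cover p q r t j hpq hpr hpt hqr hqt hrt with rfl | rfl | rfl | rfl <;>
        simp only [Pi.add_apply, Pi.smul_apply, smul_eq_mul, Dcl_succ, Lcl_succ,
          Licl_succ, Dicl_succ, hp, hq, hr, ht] <;>
        split_ifs <;> first | ring1 | simp_all
  rw [hA]
  have m1 : Dcl ∈ ({Dcl, Dcl + Lcl} ∪ Set.range Dicl ∪
      Set.range (fun i => Dcl + Licl i) : Set (Fin 5 → ℝ)) := by left; left; left; rfl
  have m2 : Dcl + Lcl ∈ ({Dcl, Dcl + Lcl} ∪ Set.range Dicl ∪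
      Set.range (fun i => Dcl + Licl i) : Set (Fin 5 → ℝ)) := by left; left; right; rfl
  have m3 : ∀ j, Dicl j ∈ ({Dcl, Dcl + Lcl} ∪ Set.range Dicl ∪
      Set.range (fun i => Dcl + Licl i) : Set (Fin 5 → ℝ)) := fun j => by
    left; right; exact ⟨j, rfl⟩
  have m4 : ∀ j, Dcl + Licl j ∈ ({Dcl, Dcl + Lcl} ∪ Set.range Dicl ∪
      Set.range (fun i => Dcl + Licl i) : Set (Fin 5 → ℝ)) := fun j => by
    right; exact ⟨j, rfl⟩
  exact coneHull_add (coneHull_add (coneHull_add (coneHull_add (coneHull_add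
    (coneHull_smul hα (mem_coneHull m1)) (coneHull_smul hβ (mem_coneHull m2)))
    (coneHull_smul hδ (mem_coneHull (m4 p)))) (coneHull_smul hγq (mem_coneHull (m3 q))))
    (coneHull_smul hγr (mem_coneHull (m3 r)))) (coneHull_smul hγt (mem_coneHull (m3 t)))

theorem key_b (i p q r : Fin 4) (hip : i ≠ p) (hiq : i ≠ q) (hir : i ≠ r)
    (hpq : p ≠ q) (hpr : p ≠ r) (hqr : q ≠ r)
    (lam mu nu rho sig tq tr : ℝ) (hlam : 0 ≤ lam) (hmu : 0 ≤ mu) (hnu : 0 ≤ nu)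
    (hrho : 0 ≤ rho) (hsig : 0 ≤ sig) (htq : 0 ≤ tq) (htr : 0 ≤ tr) (A : Fin 5 → ℝ)
    (h0 : A 0 = lam + 3*mu + nu + 3*rho + 2*sig + 2*tq + 2*tr)
    (hi : A i.succ = -mu - nu - 2*rho - sig - tq - tr)
    (hp : A p.succ = -mu - rho - sig - tq - tr)
    (hq : A q.succ = -mu - rho - tr)
    (hr : A r.succ = -mu - rho - tq) :
    A ∈ coneHull (({Lcl, Dcl + Lcl, Licl i, Dcl + Licl i} ∪
          (fun j => Licl i + Licl j) '' {j : Fin 4 | j ≠ i} ∪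
          Dicl '' {j : Fin 4 | j ≠ i}) : Set (Fin 5 → ℝ)) := by
  have hA : A = lam • Lcl + mu • (Dcl + Lcl) + nu • Licl i + rho • (Dcl + Licl i)
      + sig • (Licl i + Licl p) + tq • Dicl q + tr • Dicl r := by
    funext k
    induction k using Fin.cases with
    | zero =>
      simp only [Pi.add_apply, Pi.smul_apply, smul_eq_mul, Dcl_zero, Lcl_zero,
        Licl_zero, Dicl_zero, h0]
      ring
    | succ j =>
      rcases fin4_cover i p q r j hip hiq hir hpq hpr hqr with rfl | rfl | rfl | rfl <;>
        simp only [Pi.add_apply, Pi.smul_apply, smul_eq_mul, Dcl_succ, Lcl_succ,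
          Licl_succ, Dicl_succ, hi, hp, hq, hr] <;>
        split_ifs <;> first | ring1 | simp_all
  rw [hA]
  have m1 : ∀ x ∈ ({Lcl, Dcl + Lcl, Licl i, Dcl + Licl i} : Set (Fin 5 → ℝ)),
      x ∈ (({Lcl, Dcl + Lcl, Licl i, Dcl + Licl i} ∪
        (fun j => Licl i + Licl j) '' {j : Fin 4 | j ≠ i} ∪
        Dicl '' {j : Fin 4 | j ≠ i}) : Set (Fin 5 → ℝ)) := fun x hx => Or.inl (Or.inl hx)
  have m2 : ∀ j : Fin 4, j ≠ i → Licl i + Licl j ∈ (({Lcl, Dcl + Lcl, Licl i, Dcl + Licl i} ∪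
        (fun j => Licl i + Licl j) '' {j : Fin 4 | j ≠ i} ∪
        Dicl '' {j : Fin 4 | j ≠ i}) : Set (Fin 5 → ℝ)) := fun j hj =>
    Or.inl (Or.inr ⟨j, hj, rfl⟩)
  have m3 : ∀ j : Fin 4, j ≠ i → Dicl j ∈ (({Lcl, Dcl + Lcl, Licl i, Dcl + Licl i} ∪
        (fun j => Licl i + Licl j) '' {j : Fin 4 | j ≠ i} ∪
        Dicl '' {j : Fin 4 | j ≠ i}) : Set (Fin 5 → ℝ)) := fun j hj => Or.inr ⟨j, hj, rfl⟩
  refine coneHull_add (coneHull_add (coneHull_add (coneHull_add (coneHull_add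
    (coneHull_add (coneHull_smul hlam (mem_coneHull (m1 _ (by left; rfl))))
      (coneHull_smul hmu (mem_coneHull (m1 _ (by right; left; rfl)))))
    (coneHull_smul hnu (mem_coneHull (m1 _ (by right; right; left; rfl)))))
    (coneHull_smul hrho (mem_coneHull (m1 _ (by right; right; right; rfl)))))
    (coneHull_smul hsig (mem_coneHull (m2 p hip.symm))))
    (coneHull_smul htq (mem_coneHull (m3 q hiq.symm))))
    (coneHull_smul htr (mem_coneHull (m3 r hir.symm)))

theorem iF_add (x y d : Fin 5 → ℝ) :
    interForm16 (x + y) d = interForm16 x d + interForm16 y d := by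
  simp [interForm16]; ring
theorem iF_smul (c : ℝ) (x d : Fin 5 → ℝ) :
    interForm16 (c • x) d = c * interForm16 x d := by
  simp [interForm16]; ring
theorem iF_zero (d : Fin 5 → ℝ) : interForm16 0 d = 0 := by simp [interForm16]

theorem nef_facts {A : Fin 5 → ℝ} (hA : A ∈ nefCone16) :
    (∀ j : Fin 4, A j.succ ≤ 0) ∧
    (∀ j k : Fin 4, j ≠ k → 0 ≤ A 0 + A j.succ + A k.succ) := by
  refine coneHull_subset (T := {B : Fin 5 → ℝ | (∀ j : Fin 4, B j.succ ≤ 0) ∧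
    (∀ j k : Fin 4, j ≠ k → 0 ≤ B 0 + B j.succ + B k.succ)}) ?_ ?_ ?_ ?_ hA
  · rintro x (((rfl | rfl) | ⟨m, rfl⟩) | ⟨m, rfl⟩)
    · exact ⟨fun j => by rw [Lcl_succ], fun j k h => by rw [Lcl_succ, Lcl_succ, Lcl_zero]; norm_num⟩
    · exact ⟨fun j => by rw [Dcl_succ]; norm_num,
        fun j k h => by rw [Dcl_succ, Dcl_succ, Dcl_zero]; norm_num⟩
    · refine ⟨fun j => by rw [Licl_succ]; split <;> norm_num, fun j k h => ?_⟩
      rw [Licl_succ, Licl_succ, Licl_zero]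
      split_ifs with h1 h2 h2 <;> first | (subst h1; subst h2; exact absurd rfl h) | norm_num
    · refine ⟨fun j => by rw [Dicl_succ]; split <;> norm_num, fun j k h => ?_⟩
      rw [Dicl_succ, Dicl_succ, Dicl_zero]
      split_ifs <;> norm_num
  · exact ⟨fun j => le_refl 0, fun j k h => by norm_num⟩
  · rintro x ⟨hx1, hx2⟩ y ⟨hy1, hy2⟩
    exact ⟨fun j => by have := hx1 j; have := hy1 j; simp only [Pi.add_apply]; linarith,
      fun j k h => by have := hx2 j k h; have := hy2 j k h; simp only [Pi.add_apply]; linarith⟩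
  · rintro c hc x ⟨hx1, hx2⟩
    refine ⟨fun j => ?_, fun j k h => ?_⟩
    · simp only [Pi.smul_apply, smul_eq_mul]
      exact mul_nonpos_of_nonneg_of_nonpos hc (hx1 j)
    · have := hx2 j k h
      simp only [Pi.smul_apply, smul_eq_mul]
      nlinarith

theorem sum_succ (A : Fin 5 → ℝ) : A 1 + A 2 + A 3 + A 4 = ∑ j : Fin 4, A j.succ := by
  rw [Fin.sum_univ_four]; rfl

theorem sum4 (A : Fin 5 → ℝ) (p q r t : Fin 4) (hpq : p ≠ q) (hpr : p ≠ r) (hpt : p ≠ t)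
    (hqr : q ≠ r) (hqt : q ≠ t) (hrt : r ≠ t) :
    A 1 + A 2 + A 3 + A 4 = A p.succ + A q.succ + A r.succ + A t.succ := by
  have huniv : ({p, q, r, t} : Finset (Fin 4)) = Finset.univ := by
    revert hpq hpr hpt hqr hqt hrt; revert p q r t; decide
  rw [sum_succ, ← huniv, Finset.sum_insert (by simp [hpq, hpr, hpt]),
    Finset.sum_insert (by simp [hqr, hqt]), Finset.sum_insert (by simp [hrt]),
    Finset.sum_singleton]
  ring

theorem exists_min2 (f : Fin 4 → ℝ) :
    ∃ p q : Fin 4, p ≠ q ∧ (∀ j, f p ≤ f j) ∧ (∀ j, j ≠ p → f q ≤ f j) := by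
  obtain ⟨p, -, hp⟩ := Finset.exists_min_image Finset.univ f ⟨0, Finset.mem_univ 0⟩
  obtain ⟨q, hqm, hq⟩ := Finset.exists_min_image (Finset.univ.erase p) f
    (by
      rw [← Finset.card_pos, Finset.card_erase_of_mem (Finset.mem_univ p)]
      simp)
  exact ⟨p, q, ((Finset.mem_erase.mp hqm).1.symm : p ≠ q),
    fun j => hp j (Finset.mem_univ j),
    fun j hj => hq j (Finset.mem_erase.mpr ⟨hj, Finset.mem_univ j⟩)⟩

theorem exists_sort3 (i : Fin 4) (f : Fin 4 → ℝ) :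
    ∃ p q r : Fin 4, i ≠ p ∧ i ≠ q ∧ i ≠ r ∧ p ≠ q ∧ p ≠ r ∧ q ≠ r ∧
      f p ≤ f q ∧ f q ≤ f r := by
  obtain ⟨p, hpm, hp⟩ := Finset.exists_min_image (Finset.univ.erase i) f
    (by rw [← Finset.card_pos, Finset.card_erase_of_mem (Finset.mem_univ i)]; simp)
  obtain ⟨q, hqm, hq⟩ := Finset.exists_min_image ((Finset.univ.erase i).erase p) f
    (by
      rw [← Finset.card_pos, Finset.card_erase_of_mem
        (Finset.mem_erase.mpr ⟨(Finset.mem_erase.mp hpm).1, Finset.mem_univ p⟩),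
        Finset.card_erase_of_mem (Finset.mem_univ i)]
      simp)
  obtain ⟨r, hrm⟩ := Finset.card_pos.mp (by
    rw [Finset.card_erase_of_mem hqm, Finset.card_erase_of_mem
        (Finset.mem_erase.mpr ⟨(Finset.mem_erase.mp hpm).1, Finset.mem_univ p⟩),
        Finset.card_erase_of_mem (Finset.mem_univ i)]
    simp : 0 < (((Finset.univ.erase i).erase p).erase q).card)
  have hrq : r ≠ q := (Finset.mem_erase.mp hrm).1
  have hr2 : r ∈ (Finset.univ.erase i).erase p := (Finset.mem_erase.mp hrm).2
  have hrp : r ≠ p := (Finset.mem_erase.mp hr2).1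
  have hri : r ≠ i := (Finset.mem_erase.mp (Finset.mem_erase.mp hr2).2).1
  have hqp : q ≠ p := (Finset.mem_erase.mp hqm).1
  have hqi : q ≠ i := (Finset.mem_erase.mp (Finset.mem_erase.mp hqm).2).1
  have hpi : p ≠ i := (Finset.mem_erase.mp hpm).1
  exact ⟨p, q, r, hpi.symm, hqi.symm, hri.symm, hqp.symm, hrp.symm, hrq.symm,
    hp q (Finset.mem_erase.mp hqm).2, hq r hr2⟩

theorem complete2 (p q : Fin 4) (hpq : p ≠ q) :
    ∃ r t : Fin 4, p ≠ r ∧ p ≠ t ∧ q ≠ r ∧ q ≠ t ∧ r ≠ t := by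
  revert hpq; revert p q; decide

theorem Dcl_one : Dcl 1 = -1 := Dcl_succ 0
theorem Dcl_two : Dcl 2 = -1 := Dcl_succ 1
theorem Dcl_three : Dcl 3 = -1 := Dcl_succ 2
theorem Dcl_four : Dcl 4 = -1 := Dcl_succ 3

theorem fin4cases : ∀ m : Fin 4, m = 0 ∨ m = 1 ∨ m = 2 ∨ m = 3 := by decide

theorem nefgen (x : Fin 5 → ℝ)
    (hx : x ∈ ({Lcl, Dcl} ∪ Set.range Licl ∪ Set.range Dicl : Set (Fin 5 → ℝ))) :
    x ∈ nefCone16 := mem_coneHull hx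

theorem part_a :
    {A ∈ nefCone16 | ∀ i : Fin 4, interForm16 A Dcl ≤ interForm16 A (Licl i)} =
      coneHull ({Dcl, Dcl + Lcl} ∪ Set.range Dicl ∪
        Set.range (fun i => Dcl + Licl i)) := by
  apply Set.Subset.antisymm
  · rintro A ⟨hnef, hsel⟩
    obtain ⟨ha, hpair⟩ := nef_facts hnef
    obtain ⟨p, q, hpq, hminp, hminq⟩ := exists_min2 (fun j => A j.succ)
    obtain ⟨r, t, hpr, hpt, hqr, hqt, hrt⟩ := complete2 p q hpq
    have hs := sum4 A p q r t hpq hpr hpt hqr hqt hrt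
    have hselp := hsel p
    rw [iFD, iFL] at hselp
    refine key_a p q r t hpq hpr hpt hqr hqt hrt
      (-(A 0 + A q.succ + A r.succ + A t.succ)) (A 0 + A p.succ + A q.succ)
      (A q.succ - A p.succ) 0 (A r.succ - A q.succ) (A t.succ - A q.succ)
      (by linarith) (hpair p q hpq) (by have := hminp q; simpa using this)
      le_rfl (by have := hminq r hpr.symm; linarith)
      (by have := hminq t hpt.symm; linarith) A
      (by ring) (by ring) (by ring) (by ring) (by ring)
  · refine coneHull_subset (T := {A ∈ nefCone16 |
      ∀ i : Fin 4, interForm16 A Dcl ≤ interForm16 A (Licl i)}) ?_ ?_ ?_ ?_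
    · rintro x (((rfl | rfl) | ⟨m, rfl⟩) | ⟨m, rfl⟩)
      · refine ⟨nefgen _ (by left; left; right; rfl), fun i => ?_⟩
        rw [iFD, iFL, Dcl_zero, Dcl_one, Dcl_two, Dcl_three, Dcl_four, Dcl_succ]
        norm_num
      · refine ⟨coneHull_add (nefgen _ (by left; left; right; rfl))
          (nefgen _ (by left; left; left; rfl)), fun i => ?_⟩
        rw [iFD, iFL]
        simp only [Pi.add_apply, Dcl_zero, Dcl_one, Dcl_two, Dcl_three, Dcl_four,
          Dcl_succ, Lcl_zero, Lcl_succ]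
        have h1 : Lcl 1 = 0 := Lcl_succ 0
        have h2 : Lcl 2 = 0 := Lcl_succ 1
        have h3 : Lcl 3 = 0 := Lcl_succ 2
        have h4 : Lcl 4 = 0 := Lcl_succ 3
        rw [h1, h2, h3, h4]; norm_num
      · refine ⟨nefgen _ (by right; exact ⟨m, rfl⟩), fun i => ?_⟩
        rw [iFD, iFL]
        have h1 : Dicl m 1 = if m = 0 then 0 else -1 := Dicl_succ m 0
        have h2 : Dicl m 2 = if m = 1 then 0 else -1 := Dicl_succ m 1
        have h3 : Dicl m 3 = if m = 2 then 0 else -1 := Dicl_succ m 2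
        have h4 : Dicl m 4 = if m = 3 then 0 else -1 := Dicl_succ m 3
        rw [h1, h2, h3, h4, Dicl_zero, Dicl_succ]
        rcases fin4cases m with rfl | rfl | rfl | rfl <;> split_ifs <;> simp_all (config := { decide := true }) <;> norm_num
      · refine ⟨coneHull_add (nefgen _ (by left; left; right; rfl))
          (nefgen _ (by left; right; exact ⟨m, rfl⟩) : Licl m ∈ nefCone16), fun i => ?_⟩
        rw [iFD, iFL]
        simp only [Pi.add_apply]
        have h1 : Licl m 1 = if m = 0 then -1 else 0 := Licl_succ m 0
        have h2 : Licl m 2 = if m = 1 then -1 else 0 := Licl_succ m 1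
        have h3 : Licl m 3 = if m = 2 then -1 else 0 := Licl_succ m 2
        have h4 : Licl m 4 = if m = 3 then -1 else 0 := Licl_succ m 3
        rw [h1, h2, h3, h4, Dcl_zero, Dcl_one, Dcl_two, Dcl_three, Dcl_four,
          Dcl_succ, Licl_zero, Licl_succ]
        rcases fin4cases m with rfl | rfl | rfl | rfl <;> split_ifs <;> simp_all (config := { decide := true }) <;> norm_num
    · exact ⟨coneHull_zero, fun i => by rw [iF_zero, iF_zero]⟩
    · rintro x ⟨hx1, hx2⟩ y ⟨hy1, hy2⟩
      refine ⟨coneHull_add hx1 hy1, fun i => ?_⟩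
      rw [iF_add, iF_add]
      exact add_le_add (hx2 i) (hy2 i)
    · rintro c hc x ⟨hx1, hx2⟩
      refine ⟨coneHull_smul hc hx1, fun i => ?_⟩
      rw [iF_smul, iF_smul]
      exact mul_le_mul_of_nonneg_left (hx2 i) hc

theorem iFL_L (i : Fin 4) : interForm16 Lcl (Licl i) = 1 := by
  rw [iFL, Lcl_zero, Lcl_succ]; ring
theorem Lcl_one : Lcl 1 = 0 := Lcl_succ 0
theorem Lcl_two : Lcl 2 = 0 := Lcl_succ 1
theorem Lcl_three : Lcl 3 = 0 := Lcl_succ 2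
theorem Lcl_four : Lcl 4 = 0 := Lcl_succ 3

theorem iFD_L : interForm16 Lcl Dcl = 2 := by
  rw [iFD, Lcl_zero, Lcl_one, Lcl_two, Lcl_three, Lcl_four]; ring

theorem iFD_D : interForm16 Dcl Dcl = 0 := by
  rw [iFD, Dcl_zero, Dcl_one, Dcl_two, Dcl_three, Dcl_four]; ring

theorem iFL_D (i : Fin 4) : interForm16 Dcl (Licl i) = 1 := by
  rw [iFL, Dcl_zero, Dcl_succ]; ring

theorem iFL_Licl (m i : Fin 4) :
    interForm16 (Licl m) (Licl i) = if m = i then 0 else 1 := by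
  rw [iFL, Licl_zero, Licl_succ]; split_ifs <;> ring

theorem iFD_Licl (m : Fin 4) : interForm16 (Licl m) Dcl = 1 := by
  have h1 : Licl m 1 = if m = 0 then -1 else 0 := Licl_succ m 0
  have h2 : Licl m 2 = if m = 1 then -1 else 0 := Licl_succ m 1
  have h3 : Licl m 3 = if m = 2 then -1 else 0 := Licl_succ m 2
  have h4 : Licl m 4 = if m = 3 then -1 else 0 := Licl_succ m 3
  rw [iFD, Licl_zero, h1, h2, h3, h4]
  rcases fin4cases m with rfl | rfl | rfl | rfl <;>
    split_ifs <;> simp_all (config := { decide := true }) <;> norm_num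

theorem iFL_Dicl (m i : Fin 4) :
    interForm16 (Dicl m) (Licl i) = if m = i then 2 else 1 := by
  rw [iFL, Dicl_zero, Dicl_succ]; split_ifs <;> ring

theorem iFD_Dicl (m : Fin 4) : interForm16 (Dicl m) Dcl = 1 := by
  have h1 : Dicl m 1 = if m = 0 then 0 else -1 := Dicl_succ m 0
  have h2 : Dicl m 2 = if m = 1 then 0 else -1 := Dicl_succ m 1
  have h3 : Dicl m 3 = if m = 2 then 0 else -1 := Dicl_succ m 2
  have h4 : Dicl m 4 = if m = 3 then 0 else -1 := Dicl_succ m 3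
  rw [iFD, Dicl_zero, h1, h2, h3, h4]
  rcases fin4cases m with rfl | rfl | rfl | rfl <;>
    split_ifs <;> simp_all (config := { decide := true }) <;> norm_num

theorem part_b (i : Fin 4) :
    {A ∈ nefCone16 |
        interForm16 A (Licl i) ≤ interForm16 A Dcl ∧
        ∀ j : Fin 4, j ≠ i → interForm16 A (Licl i) ≤ interForm16 A (Licl j)} =
      coneHull ({Lcl, Dcl + Lcl, Licl i, Dcl + Licl i} ∪
        (fun j => Licl i + Licl j) '' {j : Fin 4 | j ≠ i} ∪
        Dicl '' {j : Fin 4 | j ≠ i}) := by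
  apply Set.Subset.antisymm
  · rintro A ⟨hnef, hD, hL⟩
    obtain ⟨ha, hpair⟩ := nef_facts hnef
    obtain ⟨p, q, r, hip, hiq, hir, hpq, hpr, hqr, h12, h23⟩ :=
      exists_sort3 i (fun j => A j.succ)
    have hsum := sum4 A i p q r hip hiq hir hpq hpr hqr
    rw [iFL, iFD] at hD
    have hDp : 0 ≤ A 0 + A p.succ + A q.succ + A r.succ := by linarith
    have hai : A i.succ ≤ A p.succ := by
      have := hL p hip.symm; rw [iFL, iFL] at this; linarith
    have hip2 := hpair i p hip
    have hiq2 := hpair i q hiq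
    have hir2 := hpair i r hir
    have hpq2 := hpair p q hpq
    have hpr2 := hpair p r hpr
    have hqr2 := hpair q r hqr
    have har := ha r
    rcases le_total (A q.succ + A r.succ) (A p.succ) with hcase | hcase
    · rcases le_total 0 (A 0 + A i.succ + A q.succ + A r.succ) with hrho | hrho
      · exact key_b i p q r hip hiq hir hpq hpr hqr
          (A 0 + A i.succ + A q.succ + A r.succ) (A p.succ - A q.succ - A r.succ)
          (A p.succ - A i.succ) 0 0 (A q.succ - A p.succ) (A r.succ - A p.succ)
          hrho (by linarith) (by linarith) le_rfl le_rfl (by linarith) (by linarith)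
          A (by ring) (by ring) (by ring) (by ring) (by ring)
      · exact key_b i p q r hip hiq hir hpq hpr hqr
          0 (A 0 + A i.succ + A p.succ) (A 0 + A p.succ + A q.succ + A r.succ)
          (-(A 0 + A i.succ + A q.succ + A r.succ)) 0
          (A q.succ - A p.succ) (A r.succ - A p.succ)
          le_rfl (by linarith) hDp (by linarith) le_rfl (by linarith) (by linarith)
          A (by ring) (by ring) (by ring) (by ring) (by ring)
    · rcases le_total 0 (A 0 + 2 * A p.succ + A r.succ) with hA1 | hA2
      · rcases le_total 0 (A 0 + A i.succ + A p.succ + A r.succ) with hrho | hrho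
        · exact key_b i p q r hip hiq hir hpq hpr hqr
            (A 0 + A i.succ + A p.succ + A r.succ) (-(A r.succ))
            (A p.succ - A i.succ) 0 (A q.succ - A p.succ) 0 (A r.succ - A q.succ)
            hrho (by linarith) (by linarith) le_rfl (by linarith) le_rfl (by linarith)
            A (by ring) (by ring) (by ring) (by ring) (by ring)
        · exact key_b i p q r hip hiq hir hpq hpr hqr
            0 (A 0 + A i.succ + A p.succ) (A 0 + 2 * A p.succ + A r.succ)
            (-(A 0 + A i.succ + A p.succ + A r.succ)) (A q.succ - A p.succ) 0
            (A r.succ - A q.succ)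
            le_rfl (by linarith) hA1 (by linarith) (by linarith) le_rfl (by linarith)
            A (by ring) (by ring) (by ring) (by ring) (by ring)
      · exact key_b i p q r hip hiq hir hpq hpr hqr
          0 (A 0 + A i.succ + A p.succ) 0 (A p.succ - A i.succ)
          (A 0 + A p.succ + A q.succ + A r.succ)
          (-(A 0 + 2 * A p.succ + A r.succ)) (-(A 0 + 2 * A p.succ + A q.succ))
          le_rfl (by linarith) le_rfl (by linarith) hDp (by linarith) (by linarith)
          A (by ring) (by ring) (by ring) (by ring) (by ring)
  · refine coneHull_subset (T := {A ∈ nefCone16 |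
        interForm16 A (Licl i) ≤ interForm16 A Dcl ∧
        ∀ j : Fin 4, j ≠ i → interForm16 A (Licl i) ≤ interForm16 A (Licl j)}) ?_ ?_ ?_ ?_
    · rintro x (((rfl | rfl | rfl | rfl) | ⟨m, hm, rfl⟩) | ⟨m, hm, rfl⟩)
      · exact ⟨nefgen _ (by left; left; left; rfl),
          by rw [iFL_L, iFD_L]; norm_num,
          fun j hj => by rw [iFL_L, iFL_L]⟩
      · refine ⟨coneHull_add (nefgen _ (by left; left; right; rfl))
            (nefgen _ (by left; left; left; rfl)), ?_, fun j hj => ?_⟩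
        · rw [iF_add, iF_add, iFL_L, iFD_L, iFL_D, iFD_D]; norm_num
        · rw [iF_add, iF_add, iFL_L, iFL_D, iFL_D, iFL_L]
      · exact ⟨nefgen _ (by left; right; exact ⟨i, rfl⟩),
          by rw [iFL_Licl, iFD_Licl, if_pos rfl]; norm_num,
          fun j hj => by
            rw [iFL_Licl, iFL_Licl, if_pos rfl, if_neg (Ne.symm hj)]; norm_num⟩
      · refine ⟨coneHull_add (nefgen _ (by left; left; right; rfl))
            (nefgen _ (by left; right; exact ⟨i, rfl⟩) : Licl i ∈ nefCone16),
            ?_, fun j hj => ?_⟩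
        · rw [iF_add, iF_add, iFL_Licl, iFD_Licl, iFL_D, iFD_D, if_pos rfl]; norm_num
        · rw [iF_add, iF_add, iFL_Licl, iFL_Licl, iFL_D, iFL_D, if_pos rfl,
            if_neg (Ne.symm hj)]
          norm_num
      · have hm' : m ≠ i := hm
        refine ⟨coneHull_add
            (nefgen _ (by left; right; exact ⟨i, rfl⟩) : Licl i ∈ nefCone16)
            (nefgen _ (by left; right; exact ⟨m, rfl⟩) : Licl m ∈ nefCone16),
            ?_, fun j hj => ?_⟩
        · rw [iF_add, iF_add, iFL_Licl, iFL_Licl, iFD_Licl, iFD_Licl, if_pos rfl,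
            if_neg hm']
          norm_num
        · rw [iF_add, iF_add, iFL_Licl, iFL_Licl, iFL_Licl, iFL_Licl, if_pos rfl,
            if_neg hm', if_neg (Ne.symm hj)]
          split_ifs <;> norm_num
      · have hm' : m ≠ i := hm
        refine ⟨nefgen _ (by right; exact ⟨m, rfl⟩), ?_, fun j hj => ?_⟩
        · rw [iFL_Dicl, iFD_Dicl, if_neg hm']
        · rw [iFL_Dicl, iFL_Dicl, if_neg hm']
          split_ifs <;> norm_num
    · exact ⟨coneHull_zero, by rw [iF_zero, iF_zero], fun j hj => by rw [iF_zero, iF_zero]⟩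
    · rintro x ⟨hx1, hx2, hx3⟩ y ⟨hy1, hy2, hy3⟩
      refine ⟨coneHull_add hx1 hy1, ?_, fun j hj => ?_⟩
      · rw [iF_add, iF_add]; exact add_le_add hx2 hy2
      · rw [iF_add, iF_add]; exact add_le_add (hx3 j hj) (hy3 j hj)
    · rintro c hc x ⟨hx1, hx2, hx3⟩
      refine ⟨coneHull_smul hc hx1, ?_, fun j hj => ?_⟩
      · rw [iF_smul, iF_smul]; exact mul_le_mul_of_nonneg_left hx2 hc
      · rw [iF_smul, iF_smul]; exact mul_le_mul_of_nonneg_left (hx3 j hj) hc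


/-- (a) The subcone of nef classes `A` with `⟨A,D⟩ ≤ ⟨A,Lᵢ⟩` for all `i`
is generated by `D`, `D + L`, the `Dᵢ` and the `D + Lᵢ`; (b) for each `i`, the subcone of
nef classes `A` with `⟨A,Lᵢ⟩ ≤ ⟨A,D⟩` and `⟨A,Lᵢ⟩ ≤ ⟨A,Lⱼ⟩` for `j ≠ i` is generated by
`L`, `D + L`, `Lᵢ`, `D + Lᵢ`, the `Lᵢ + Lⱼ` for `j ≠ i`, and the `Dⱼ` for `j ≠ i`. -/
theorem statement16 :
    ({A ∈ nefCone16 | ∀ i : Fin 4, interForm16 A Dcl ≤ interForm16 A (Licl i)} =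
      coneHull ({Dcl, Dcl + Lcl} ∪ Set.range Dicl ∪
        Set.range (fun i => Dcl + Licl i))) ∧
    (∀ i : Fin 4,
      {A ∈ nefCone16 |
          interForm16 A (Licl i) ≤ interForm16 A Dcl ∧
          ∀ j : Fin 4, j ≠ i → interForm16 A (Licl i) ≤ interForm16 A (Licl j)} =
        coneHull ({Lcl, Dcl + Lcl, Licl i, Dcl + Licl i} ∪
          (fun j => Licl i + Licl j) '' {j : Fin 4 | j ≠ i} ∪
          Dicl '' {j : Fin 4 | j ≠ i})) := by
  exact ⟨part_a, part_b⟩
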